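/- The number of strongly primitive characters of Γ is q(q−1)(q²−1); no strongly primitive character w satisfies w∘σ = w; and consequently the number of orbits of the Frobenius action w ↦ w∘σ on the set of strongly primitive characters of Γ equals q(q−1)(q²−1)/2. -/

import Mathlib

/-- A character of the group `Γ = K^× × K` (the second factor additive), encoded as a
multiplicative function `(Kˣ × K) → ℂˣ`. -/
def IsChar {K : Type*} [Field K] (w : Kˣ × K → ℂˣ) : Prop :=
  ∀ (a b : Kˣ) (x y : K), w (a * b, x + y) = w (a, x) * w (b, y)

/-- A character `w` of `Γ = K^× × K` is strongly primitive if the additive character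
`ψ(x) = w(1, x)` of `K` does not factor as `η ∘ Tr` for a homomorphism
`η : (K₀, +) → ℂ^×` on the subfield `K₀ = {x : x^q = x}`, where `Tr x = x + x^q`. -/
def StronglyPrimitive (q : ℕ) {K : Type*} [Field K] (w : Kˣ × K → ℂˣ) : Prop :=
  IsChar w ∧
    ¬∃ η : K → ℂˣ, (∀ x y : K, x ^ q = x → y ^ q = y → η (x + y) = η x * η y) ∧
      ∀ x : K, w (1, x) = η (x + x ^ q)

section AuxStmt14


lemma dual_equiv (G : Type*) [CommGroup G] [Finite G] : Nonempty ((G →* ℂˣ) ≃ G) := by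
  have h1 : NeZero (Monoid.exponent G) := ⟨Monoid.exponent_ne_zero_of_finite⟩
  have h2 : NeZero ((Monoid.exponent G : ℕ) : ℂ) := ⟨Nat.cast_ne_zero.mpr h1.1⟩
  exact ⟨(CommGroup.monoidHom_mulEquiv_of_hasEnoughRootsOfUnity G ℂ).some.toEquiv⟩

lemma finite_dual (G : Type*) [CommGroup G] [Finite G] : Finite (G →* ℂˣ) :=
  Finite.of_equiv G (dual_equiv G).some.symm

lemma card_dual (G : Type*) [CommGroup G] [Finite G] : Nat.card (G →* ℂˣ) = Nat.card G :=
  Nat.card_congr (dual_equiv G).some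

open Polynomial in
lemma card_rootSet_le {K : Type*} [Field K] [Fintype K] {q : ℕ} (hq2 : 2 ≤ q) (c : K) :
    {x : K | x ^ q + c * x = 0}.ncard ≤ q := by
  classical
  set p : K[X] := X ^ q + C c * X with hp
  have hpne : p ≠ 0 := by
    intro h
    have h0 : p.coeff q = 0 := by rw [h]; simp
    rw [hp] at h0
    simp only [coeff_add, coeff_X_pow, if_pos rfl, coeff_C_mul, coeff_X,
      if_neg (by omega : ¬ (1:ℕ) = q)] at h0
    simpa using h0
  have hdeg : p.natDegree ≤ q := by
    refine le_trans (natDegree_add_le _ _) ?_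
    simp only [natDegree_X_pow, max_le_iff, le_refl, true_and]
    exact le_trans (natDegree_C_mul_le _ _) (by simp [natDegree_X]; omega)
  have hsub : {x : K | x ^ q + c * x = 0} ⊆ ↑p.roots.toFinset := by
    intro x hx
    simp only [Finset.coe_sort_coe, Multiset.mem_toFinset, Finset.mem_coe, mem_roots hpne,
      IsRoot.def, hp, eval_add, eval_pow, eval_X, eval_mul, eval_C]
    exact (mem_roots hpne).mpr (by simpa [hp] using hx)
  calc ({x : K | x ^ q + c * x = 0}).ncard ≤ (↑p.roots.toFinset : Set K).ncard :=
        Set.ncard_le_ncard hsub (Set.toFinite _)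
    _ = p.roots.toFinset.card := Set.ncard_coe_finset _
    _ ≤ Multiset.card p.roots := Multiset.toFinset_card_le _
    _ ≤ p.natDegree := card_roots' p
    _ ≤ q := hdeg

lemma trace_facts {K : Type*} [Field K] [Fintype K] {q : ℕ} (hq2 : 2 ≤ q)
    (hpow : ∀ x y : K, (x + y) ^ q = x ^ q + y ^ q)
    (hxqq : ∀ x : K, (x ^ q) ^ q = x)
    (hcard : Fintype.card K = q ^ 2) :
    (∀ z : K, z + z ^ q = 0 → ∃ x : K, x ^ q - x = z) ∧
    (∀ y : K, y ^ q = y → ∃ x : K, x + x ^ q = y) ∧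
    {z : K | z + z ^ q = 0}.ncard = q := by
  classical
  have hq0 : 0 < q := by omega
  have hsubpow : ∀ x y : K, (x - y) ^ q = x ^ q - y ^ q := by
    intro x y
    have h := hpow (x - y) y
    rw [sub_add_cancel] at h
    exact eq_sub_of_add_eq h.symm
  set F : K →+ K := AddMonoidHom.mk' (fun x => x ^ q - x)
    (fun a b => by show (a + b) ^ q - (a + b) = _; rw [hpow]; ring) with hF
  set T : K →+ K := AddMonoidHom.mk' (fun x => x + x ^ q)
    (fun a b => by show (a + b) + (a + b) ^ q = _; rw [hpow]; ring) with hT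
  have hFapp : ∀ x : K, F x = x ^ q - x := fun x => rfl
  have hTapp : ∀ x : K, T x = x + x ^ q := fun x => rfl
  have hcardN : Nat.card K = q ^ 2 := by rw [Nat.card_eq_fintype_card, hcard]
  have hcoe : ∀ S : AddSubgroup K, Nat.card S = (S : Set K).ncard :=
    fun S => Nat.card_coe_set_eq _
  set Sfix : Set K := {y : K | y ^ q = y} with hSfix
  have hkerFset : (F.ker : Set K) = Sfix := by
    ext x
    simp [AddMonoidHom.mem_ker, hFapp, sub_eq_zero, hSfix]
  have hkerTset : (T.ker : Set K) = {z : K | z + z ^ q = 0} := by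
    ext x
    simp [AddMonoidHom.mem_ker, hTapp]
  have hkerFle : Nat.card F.ker ≤ q := by
    rw [hcoe, hkerFset]
    have : Sfix = {x : K | x ^ q + (-1 : K) * x = 0} := by
      ext x
      simp only [hSfix, Set.mem_setOf_eq, neg_one_mul]
      constructor <;> intro h <;> linear_combination h
    rw [this]; exact card_rootSet_le hq2 _
  have hkerTle : Nat.card T.ker ≤ q := by
    rw [hcoe, hkerTset]
    have : {z : K | z + z ^ q = 0} = {x : K | x ^ q + (1 : K) * x = 0} := by
      ext x
      simp only [Set.mem_setOf_eq, one_mul]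
      constructor <;> intro h <;> linear_combination h
    rw [this]; exact card_rootSet_le hq2 _
  have hiso : ∀ f : K →+ K, Nat.card K = Nat.card f.range * Nat.card f.ker := by
    intro f
    rw [AddSubgroup.card_eq_card_quotient_mul_card_addSubgroup f.ker]
    congr 1
    exact Nat.card_congr (QuotientAddGroup.quotientKerEquivRange f).toEquiv
  have hFT : F.range ≤ T.ker := by
    rintro y ⟨x, rfl⟩
    simp only [AddMonoidHom.mem_ker, hTapp, hFapp]
    rw [hsubpow, hxqq]
    ring
  have hTfix : (T.range : Set K) ⊆ Sfix := by
    rintro y ⟨x, rfl⟩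
    simp only [hSfix, Set.mem_setOf_eq, hTapp]
    rw [hpow, hxqq]
    ring
  have hrangeFle : Nat.card F.range ≤ q :=
    le_trans (AddSubgroup.card_le_of_le hFT) hkerTle
  have hkerFeq : Nat.card F.ker = q := by
    have h := hiso F
    rw [hcardN, pow_two] at h
    have h2 : q ≤ Nat.card F.ker := by
      by_contra hlt
      push_neg at hlt
      have : Nat.card F.range * Nat.card F.ker < q * q :=
        lt_of_le_of_lt (Nat.mul_le_mul_right _ hrangeFle) ((Nat.mul_lt_mul_left hq0).mpr hlt)
      omega
    omega
  have hfixeq : Sfix.ncard = q := by rw [← hkerFset, ← hcoe, hkerFeq]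
  have hrangeTle : Nat.card T.range ≤ q := by
    rw [hcoe]
    exact le_trans (Set.ncard_le_ncard hTfix (Set.toFinite _)) (le_of_eq hfixeq)
  have hkerTeq : Nat.card T.ker = q := by
    have h := hiso T
    rw [hcardN, pow_two] at h
    have h2 : q ≤ Nat.card T.ker := by
      by_contra hlt
      push_neg at hlt
      have : Nat.card T.range * Nat.card T.ker < q * q :=
        lt_of_le_of_lt (Nat.mul_le_mul_right _ hrangeTle) ((Nat.mul_lt_mul_left hq0).mpr hlt)
      omega
    omega
  have hrangeTeq : Nat.card T.range = q := by
    have h := hiso T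
    rw [hcardN, pow_two, hkerTeq] at h
    exact (Nat.eq_of_mul_eq_mul_right hq0 h.symm)
  have hrangeFeq : Nat.card F.range = q := by
    have h := hiso F
    rw [hcardN, pow_two, hkerFeq] at h
    exact (Nat.eq_of_mul_eq_mul_right hq0 h.symm)
  have hTsurj : (T.range : Set K) = Sfix := by
    refine Set.eq_of_subset_of_ncard_le hTfix ?_ (Set.toFinite _)
    rw [← hcoe, hfixeq, hrangeTeq]
  have hFkerT : (F.range : Set K) = (T.ker : Set K) := by
    refine Set.eq_of_subset_of_ncard_le (fun x hx => hFT hx) ?_ (Set.toFinite _)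
    rw [← hcoe, ← hcoe, hkerTeq, hrangeFeq]
  refine ⟨?_, ?_, ?_⟩
  · intro z hz
    have hzmem : z ∈ (T.ker : Set K) := by rw [hkerTset]; exact hz
    rw [← hFkerT] at hzmem
    obtain ⟨x, hx⟩ := hzmem
    exact ⟨x, hx⟩
  · intro y hy
    have hymem : y ∈ Sfix := hy
    rw [← hTsurj] at hymem
    obtain ⟨x, hx⟩ := hymem
    exact ⟨x, hx⟩
  · rw [← hkerTset, ← hcoe, hkerTeq]

lemma card_trivchar {G : Type*} [AddCommGroup G] [Finite G] (H : AddSubgroup G) :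
    {ψ : Multiplicative G →* ℂˣ | ∀ z ∈ H, ψ (Multiplicative.ofAdd z) = 1}.ncard
      = Nat.card (G ⧸ H) := by
  classical
  set π : Multiplicative G →* Multiplicative (G ⧸ H) :=
    AddMonoidHom.toMultiplicative (QuotientAddGroup.mk' H) with hπ
  have hπs : Function.Surjective π := fun y => by
    obtain ⟨x, hx⟩ := QuotientAddGroup.mk'_surjective H y.toAdd
    exact ⟨Multiplicative.ofAdd x, by
      show Multiplicative.ofAdd ((QuotientAddGroup.mk' H) x) = y
      rw [hx]; rfl⟩
  set cmp : (Multiplicative (G ⧸ H) →* ℂˣ) → (Multiplicative G →* ℂˣ) :=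
    fun φ => φ.comp π with hcmp
  have hinj : Function.Injective cmp := fun φ₁ φ₂ h => by
    ext y
    exact congrArg Units.val (DFunLike.congr_fun h (Multiplicative.ofAdd y))
  have hrange : Set.range cmp
      = {ψ : Multiplicative G →* ℂˣ | ∀ z ∈ H, ψ (Multiplicative.ofAdd z) = 1} := by
    ext ψ
    constructor
    · rintro ⟨φ, rfl⟩ z hz
      show φ (π (Multiplicative.ofAdd z)) = 1
      have h1 : π (Multiplicative.ofAdd z) = 1 := by
        show Multiplicative.ofAdd ((QuotientAddGroup.mk' H) z) = 1
        rw [QuotientAddGroup.mk'_apply, (QuotientAddGroup.eq_zero_iff z).mpr hz]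
        rfl
      rw [h1, map_one]
    · intro hψ
      refine ⟨AddMonoidHom.toMultiplicativeLeft
        (QuotientAddGroup.lift H (MonoidHom.toAdditiveRight ψ) fun z hz => ?_), ?_⟩
      · show Additive.ofMul (ψ (Multiplicative.ofAdd z)) = 0
        rw [hψ z hz]
        rfl
      · ext x
        rfl
  calc {ψ : Multiplicative G →* ℂˣ | ∀ z ∈ H, ψ (Multiplicative.ofAdd z) = 1}.ncard
      = (Set.range cmp).ncard := by rw [hrange]
    _ = Nat.card (Multiplicative (G ⧸ H) →* ℂˣ) := by
        rw [← Nat.card_coe_set_eq, Nat.card_range_of_injective hinj]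
    _ = Nat.card (Multiplicative (G ⧸ H)) := card_dual _
    _ = Nat.card (G ⧸ H) := Nat.card_congr Multiplicative.toAdd

lemma factors_iff {K : Type*} [Field K] {q : ℕ} (hq2 : 2 ≤ q) (ψ : K → ℂˣ)
    (hadd : ∀ x y : K, ψ (x + y) = ψ x * ψ y)
    (hpow : ∀ x y : K, (x + y) ^ q = x ^ q + y ^ q)
    (hsurjT : ∀ y : K, y ^ q = y → ∃ x : K, x + x ^ q = y) :
    (∃ η : K → ℂˣ, (∀ x y : K, x ^ q = x → y ^ q = y → η (x + y) = η x * η y) ∧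
        ∀ x : K, ψ x = η (x + x ^ q)) ↔ ∀ z : K, z + z ^ q = 0 → ψ z = 1 := by
  classical
  constructor
  · rintro ⟨η, hη1, hη2⟩ z hz
    have h0 : (0 : K) ^ q = 0 := zero_pow (by omega)
    have h00 := hη1 0 0 h0 h0
    rw [add_zero] at h00
    have hη0 : η 0 = 1 := by
      have := h00.symm
      rwa [mul_eq_right] at this
    rw [hη2 z, hz, hη0]
  · intro htriv
    have hψ0 : ψ 0 = 1 := by
      have := (hadd 0 0).symm
      rw [add_zero] at this
      rwa [mul_eq_right] at this
    have hsubpow : ∀ x y : K, (x - y) ^ q = x ^ q - y ^ q := by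
      intro x y
      have h := hpow (x - y) y
      rw [sub_add_cancel] at h
      exact eq_sub_of_add_eq h.symm
    have hcongr : ∀ a b : K, a + a ^ q = b + b ^ q → ψ a = ψ b := by
      intro a b hab
      have h1 : (a - b) + (a - b) ^ q = 0 := by
        rw [hsubpow]
        linear_combination hab
      have h2 : ψ (a - b) = 1 := htriv _ h1
      calc ψ a = ψ ((a - b) + b) := by ring_nf
        _ = ψ (a - b) * ψ b := hadd _ _
        _ = ψ b := by rw [h2, one_mul]
    set η : K → ℂˣ := fun y => if h : ∃ x : K, x + x ^ q = y then ψ h.choose else 1 with hη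
    have hη2 : ∀ a : K, η (a + a ^ q) = ψ a := by
      intro a
      have hex : ∃ x : K, x + x ^ q = a + a ^ q := ⟨a, rfl⟩
      rw [hη]
      simp only [dif_pos hex]
      exact hcongr _ _ hex.choose_spec
    refine ⟨η, ?_, fun x => (hη2 x).symm⟩
    intro x y hx hy
    obtain ⟨a, ha⟩ := hsurjT x hx
    obtain ⟨b, hb⟩ := hsurjT y hy
    have hab : (a + b) + (a + b) ^ q = x + y := by
      rw [hpow, ← ha, ← hb]; ring
    calc η (x + y) = η ((a + b) + (a + b) ^ q) := by rw [hab]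
      _ = ψ (a + b) := hη2 _
      _ = ψ a * ψ b := hadd a b
      _ = η (a + a ^ q) * η (b + b ^ q) := by rw [hη2, hη2]
      _ = η x * η y := by rw [ha, hb]

end AuxStmt14

/-- There are `q(q−1)(q²−1)` strongly primitive characters of `Γ`, none of them is fixed by
the Frobenius `w ↦ w∘σ`, and hence there are `q(q−1)(q²−1)/2` Frobenius orbits of strongly
primitive characters. -/
theorem stmt14 (q : ℕ) (hq : IsPrimePow q)
    (K : Type*) [Field K] [Fintype K] (hK : Fintype.card K = q ^ 2) :
    {w : Kˣ × K → ℂˣ | StronglyPrimitive q w}.Finite ∧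
    {w : Kˣ × K → ℂˣ | StronglyPrimitive q w}.ncard = q * (q - 1) * (q ^ 2 - 1) ∧
    (∀ w : Kˣ × K → ℂˣ, StronglyPrimitive q w →
      (fun g : Kˣ × K => w (g.1 ^ q, g.2 ^ q)) ≠ w) ∧
    {s : Set (Kˣ × K → ℂˣ) | ∃ w : Kˣ × K → ℂˣ, StronglyPrimitive q w ∧
      s = {w, fun g : Kˣ × K => w (g.1 ^ q, g.2 ^ q)}}.ncard =
        q * (q - 1) * (q ^ 2 - 1) / 2 := by
  classical
  have hq2 : 2 ≤ q := hq.two_le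
  -- characteristic facts
  obtain ⟨p, n, hp, hn, hpn⟩ := hq
  have hpp : p.Prime := hp.nat_prime
  haveI : Fact p.Prime := ⟨hpp⟩
  have hcharK : CharP K p := by
    have hcp : (ringChar K).Prime := CharP.char_is_prime K (ringChar K)
    obtain ⟨m, -, hm⟩ := FiniteField.card K (ringChar K)
    have hdvd : ringChar K ∣ p := by
      have h1 : ringChar K ∣ p ^ (n * 2) := by
        rw [pow_mul, hpn, ← hK, hm]
        exact dvd_pow_self _ (by positivity)
      exact hcp.dvd_of_dvd_pow h1
    have : ringChar K = p := ((Nat.prime_dvd_prime_iff_eq hcp hpp).mp hdvd)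
    rw [← this]
    exact ringChar.charP K
  haveI := hcharK
  have hpowc : ∀ x y : K, (x + y) ^ q = x ^ q + y ^ q := by
    intro x y
    rw [← hpn]
    exact add_pow_char_pow x y p n
  have hxqq : ∀ x : K, (x ^ q) ^ q = x := by
    intro x
    calc (x ^ q) ^ q = x ^ (q * q) := (pow_mul x q q).symm
      _ = x ^ q ^ 2 := by rw [← pow_two]
      _ = x ^ Fintype.card K := by rw [hK]
      _ = x := FiniteField.pow_card x
  obtain ⟨hsurjF, hsurjT, hkercard⟩ := trace_facts hq2 hpowc hxqq hK
  -- the no-fixed-point statement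
  have hfix : ∀ w : Kˣ × K → ℂˣ, StronglyPrimitive q w →
      (fun g : Kˣ × K => w (g.1 ^ q, g.2 ^ q)) ≠ w := by
    rintro w ⟨hc, hnf⟩ heq
    apply hnf
    have hadd : ∀ x y : K, w (1, x + y) = w (1, x) * w (1, y) := by
      intro x y
      have := hc 1 1 x y
      rwa [mul_one] at this
    have hfixψ : ∀ x : K, w (1, x ^ q) = w (1, x) := by
      intro x
      have h := congrFun heq (1, x)
      simpa using h
    have htriv : ∀ z : K, z + z ^ q = 0 → w (1, z) = 1 := by
      intro z hz
      obtain ⟨x, hx⟩ := hsurjF z hz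
      have h2 : z + x = x ^ q := by rw [← hx]; ring
      have h3 := hadd z x
      rw [h2, hfixψ] at h3
      exact (mul_eq_right.mp h3.symm)
    exact (factors_iff hq2 (fun x => w (1, x)) hadd hpowc hsurjT).mpr htriv
  -- character decomposition
  haveI : Finite (Kˣ →* ℂˣ) := finite_dual _
  haveI : Finite (Multiplicative K →* ℂˣ) := finite_dual _
  set B : Set (Multiplicative K →* ℂˣ) :=
    {ψ | ¬ ∀ z : K, z + z ^ q = 0 → ψ (Multiplicative.ofAdd z) = 1} with hB
  set Φ : (Kˣ →* ℂˣ) × (Multiplicative K →* ℂˣ) → (Kˣ × K → ℂˣ) :=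
    fun p g => p.1 g.1 * p.2 (Multiplicative.ofAdd g.2) with hΦ
  have hΦinj : Function.Injective Φ := by
    rintro ⟨χ₁, ψ₁⟩ ⟨χ₂, ψ₂⟩ h
    have h1 : ∀ a : Kˣ, χ₁ a = χ₂ a := by
      intro a
      have := congrFun h (a, 0)
      simpa [hΦ] using this
    have h2 : ∀ x : K, ψ₁ (Multiplicative.ofAdd x) = ψ₂ (Multiplicative.ofAdd x) := by
      intro x
      have := congrFun h (1, x)
      simpa [hΦ] using this
    exact Prod.ext (MonoidHom.ext h1) (MonoidHom.ext fun x => h2 x.toAdd)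
  have hSP : {w : Kˣ × K → ℂˣ | StronglyPrimitive q w} = Φ '' (Set.univ ×ˢ B) := by
    ext w
    simp only [Set.mem_setOf_eq, Set.mem_image, Set.mem_prod, Set.mem_univ, true_and]
    constructor
    · rintro ⟨hc, hnf⟩
      have hone : w (1, 0) = 1 := by
        have := hc 1 1 0 0
        rw [mul_one, add_zero] at this
        exact (mul_eq_right.mp this.symm)
      have hadd : ∀ x y : K, w (1, x + y) = w (1, x) * w (1, y) := by
        intro x y
        have := hc 1 1 x y
        rwa [mul_one] at this
      refine ⟨(⟨⟨fun a => w (a, 0), hone⟩, fun a b => by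
          have := hc a b 0 0; rwa [add_zero] at this⟩,
        ⟨⟨fun x => w (1, x.toAdd), hone⟩, fun x y => hadd x.toAdd y.toAdd⟩), ?_, ?_⟩
      · intro htriv
        exact hnf ((factors_iff hq2 (fun x => w (1, x)) hadd hpowc hsurjT).mpr htriv)
      · funext g
        show w (g.1, 0) * w (1, g.2) = w g
        have := hc g.1 1 0 g.2
        rw [mul_one, zero_add] at this
        exact this.symm
    · rintro ⟨⟨χ, ψ⟩, hψB, rfl⟩
      have happ : ∀ (a : Kˣ) (x : K), Φ (χ, ψ) (a, x) = χ a * ψ (Multiplicative.ofAdd x) :=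
        fun a x => rfl
      constructor
      · intro a b x y
        rw [happ, happ, happ, map_mul]
        have : Multiplicative.ofAdd (x + y) = Multiplicative.ofAdd x * Multiplicative.ofAdd y :=
          rfl
        rw [this, map_mul]
        rw [mul_mul_mul_comm]
      · rintro ⟨η, hη1, hη2⟩
        apply hψB
        have hadd : ∀ x y : K, (fun x : K => Φ (χ, ψ) (1, x)) (x + y)
            = (fun x : K => Φ (χ, ψ) (1, x)) x * (fun x : K => Φ (χ, ψ) (1, x)) y := by
          intro x y
          simp only [happ, map_one, one_mul]
          have : Multiplicative.ofAdd (x + y) = Multiplicative.ofAdd x * Multiplicative.ofAdd y :=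
            rfl
          rw [this, map_mul]
        have htriv := (factors_iff hq2 (fun x => Φ (χ, ψ) (1, x)) hadd hpowc hsurjT).mp
          ⟨η, hη1, hη2⟩
        intro z hz
        have := htriv z hz
        simpa [happ] using this
  -- counting
  set T : K →+ K := AddMonoidHom.mk' (fun x => x + x ^ q)
    (fun a b => by show (a + b) + (a + b) ^ q = _; rw [hpowc]; ring) with hT
  have hq0 : 0 < q := by omega
  have hkerset : ((AddMonoidHom.ker T) : Set K) = {z : K | z + z ^ q = 0} := by
    ext x
    simp [AddMonoidHom.mem_ker, hT]
  have hkerTcard : Nat.card (AddMonoidHom.ker T) = q := by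
    have hco : Nat.card (AddMonoidHom.ker T) = ((AddMonoidHom.ker T : Set K)).ncard :=
      Nat.card_coe_set_eq _
    rw [hco, hkerset, hkercard]
  have hquot : Nat.card (K ⧸ AddMonoidHom.ker T) = q := by
    have h := AddSubgroup.card_eq_card_quotient_mul_card_addSubgroup (AddMonoidHom.ker T)
    rw [Nat.card_eq_fintype_card, hK, hkerTcard, pow_two] at h
    exact Nat.eq_of_mul_eq_mul_right hq0 h.symm
  have hBcompl : Bᶜ = {ψ : Multiplicative K →* ℂˣ |
      ∀ z ∈ AddMonoidHom.ker T, ψ (Multiplicative.ofAdd z) = 1} := by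
    ext ψ
    simp only [hB, Set.mem_compl_iff, Set.mem_setOf_eq, not_not]
    constructor
    · intro h z hz
      exact h z (by
        have : z ∈ ((AddMonoidHom.ker T) : Set K) := hz
        rwa [hkerset] at this)
    · intro h z hz
      exact h z (by rw [← SetLike.mem_coe, hkerset]; exact hz)
  have hcardA : Nat.card (Multiplicative K →* ℂˣ) = q ^ 2 := by
    rw [card_dual, Nat.card_congr Multiplicative.toAdd, Nat.card_eq_fintype_card, hK]
  have hBcard : B.ncard = q ^ 2 - q := by
    have h1 : Bᶜ.ncard = q := by rw [hBcompl, card_trivchar, hquot]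
    have h2 := Set.ncard_add_ncard_compl B
    rw [h1, hcardA] at h2
    omega
  have hMcard : Nat.card (Kˣ →* ℂˣ) = q ^ 2 - 1 := by
    rw [card_dual, Nat.card_eq_fintype_card, Fintype.card_units, hK]
  have hfin : {w : Kˣ × K → ℂˣ | StronglyPrimitive q w}.Finite := by
    rw [hSP]
    exact ((Set.univ ×ˢ B).toFinite).image _
  have hScard : {w : Kˣ × K → ℂˣ | StronglyPrimitive q w}.ncard
      = q * (q - 1) * (q ^ 2 - 1) := by
    rw [hSP, Set.ncard_image_of_injective _ hΦinj]
    have h1 : ((Set.univ : Set (Kˣ →* ℂˣ)) ×ˢ B).ncard = (q ^ 2 - 1) * (q ^ 2 - q) := by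
      rw [← Nat.card_coe_set_eq, Nat.card_congr (Equiv.Set.prod _ _), Nat.card_prod,
        Nat.card_coe_set_eq, Nat.card_coe_set_eq, Set.ncard_univ, hMcard, hBcard]
    rw [h1]
    have h2 : q * (q - 1) = q ^ 2 - q := by
      rw [Nat.mul_sub, mul_one, ← pow_two]
    rw [← h2, mul_comm]
  refine ⟨hfin, hScard, hfix, ?_⟩
  -- orbit counting
  set m : (Kˣ × K → ℂˣ) → (Kˣ × K → ℂˣ) := fun w g => w (g.1 ^ q, g.2 ^ q) with hm
  have hmm : ∀ w, m (m w) = w := by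
    intro w
    funext g
    show w ((g.1 ^ q) ^ q, (g.2 ^ q) ^ q) = w g
    have h1 : (g.1 ^ q) ^ q = g.1 := by
      ext
      rw [Units.val_pow_eq_pow_val, Units.val_pow_eq_pow_val]
      exact hxqq _
    rw [h1, hxqq g.2]
  have hmS : ∀ w, StronglyPrimitive q w → StronglyPrimitive q (m w) := by
    rintro w ⟨hc, hnf⟩
    constructor
    · intro a b x y
      show w ((a * b) ^ q, (x + y) ^ q) = w (a ^ q, x ^ q) * w (b ^ q, y ^ q)
      rw [mul_pow, hpowc]
      exact hc _ _ _ _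
    · rintro ⟨η, hη1, hη2⟩
      apply hnf
      refine ⟨η, hη1, fun x => ?_⟩
      have h := hη2 (x ^ q)
      have h1 : m w (1, x ^ q) = w (1, x) := by
        show w ((1 : Kˣ) ^ q, (x ^ q) ^ q) = w (1, x)
        rw [one_pow, hxqq]
      rw [h1, hxqq] at h
      rw [h, add_comm]
  -- orbit counting proper
  set Sf : Finset (Kˣ × K → ℂˣ) := hfin.toFinset with hSf
  set Of : Finset (Set (Kˣ × K → ℂˣ)) :=
    Sf.image (fun w => ({w, m w} : Set (Kˣ × K → ℂˣ))) with hOf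
  have hOset : {s : Set (Kˣ × K → ℂˣ) | ∃ w : Kˣ × K → ℂˣ, StronglyPrimitive q w ∧
      s = {w, fun g : Kˣ × K => w (g.1 ^ q, g.2 ^ q)}} = ↑Of := by
    ext s
    simp only [Set.mem_setOf_eq, hOf, Finset.coe_image, Set.mem_image, Finset.mem_coe,
      hSf, Set.Finite.mem_toFinset, Set.mem_setOf_eq]
    constructor
    · rintro ⟨w, hw, rfl⟩
      exact ⟨w, hw, rfl⟩
    · rintro ⟨w, hw, rfl⟩
      exact ⟨w, hw, rfl⟩
  have hcard2 : Sf.card = 2 * Of.card := by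
    rw [Finset.card_eq_sum_card_fiberwise
      (f := fun w => ({w, m w} : Set (Kˣ × K → ℂˣ))) (t := Of)
      (fun w hw => Finset.mem_image_of_mem _ hw)]
    rw [Finset.sum_congr rfl (g := fun _ => 2) ?_, Finset.sum_const, smul_eq_mul, mul_comm]
    intro s hs
    obtain ⟨w₀, hw₀S, rfl⟩ := Finset.mem_image.mp hs
    have hw₀ : StronglyPrimitive q w₀ := hfin.mem_toFinset.mp hw₀S
    have hfib : Sf.filter (fun w => ({w, m w} : Set (Kˣ × K → ℂˣ)) = {w₀, m w₀})
        = {w₀, m w₀} := by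
      ext w
      simp only [Finset.mem_filter, Finset.mem_insert, Finset.mem_singleton, hSf,
        Set.Finite.mem_toFinset, Set.mem_setOf_eq]
      constructor
      · rintro ⟨hwS, hwe⟩
        have hmem : w ∈ ({w₀, m w₀} : Set (Kˣ × K → ℂˣ)) := by
          rw [← hwe]
          exact Set.mem_insert _ _
        simpa using hmem
      · rintro (rfl | rfl)
        · exact ⟨hw₀, rfl⟩
        · refine ⟨hmS _ hw₀, ?_⟩
          rw [hmm w₀]
          exact Set.pair_comm _ _
    rw [hfib]
    exact Finset.card_pair (Ne.symm (hfix w₀ hw₀))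
  have hOcard : Of.card = q * (q - 1) * (q ^ 2 - 1) / 2 := by
    have h1 : Sf.card = q * (q - 1) * (q ^ 2 - 1) := by
      rw [hSf, ← Set.ncard_eq_toFinset_card _ hfin]
      exact hScard
    omega
  rw [hOset, Set.ncard_coe_finset, hOcard]
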